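/- Let n ≥ 2 and 1 ≤ k ≤ n−1. For every permutation w of {1,…,n} with w⁻¹(k) < w⁻¹(k+1), there exist a unique permutation σ with σ(k) = k and σ(k+1) = k+1 and a unique pair (i,j) with 1 ≤ i < j ≤ n such that w = σ ∘ τ^{n,k}_{i,j}. In other words, composition gives a bijection from Ĝ_k × X_{n,k} onto {w ∈ S_n : w⁻¹(k) < w⁻¹(k+1)}, where Ĝ_k is the subgroup of permutations fixing both k and k+1 and X_{n,k} = {τ^{n,k}_{i,j} : 1 ≤ i < j ≤ n}. -/

import Mathlib

/-- `IsTau k hk i j w` says that the permutation `w` of `{0,…,n-1}` satisfies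
`w i = k`, `w j = k+1`, and `w` is strictly increasing on the complement of `{i, j}`.
(This is the defining property of `τ^{n,k}_{i,j}`, in 0-indexed form.) -/
def IsTau {n : ℕ} (k : ℕ) (hk : k + 1 < n) (i j : Fin n) (w : Equiv.Perm (Fin n)) : Prop :=
  w i = ⟨k, Nat.lt_of_succ_lt hk⟩ ∧ w j = ⟨k + 1, hk⟩ ∧
    ∀ s t : Fin n, s < t → s ≠ i → s ≠ j → t ≠ i → t ≠ j → w s < w t

section Aux

variable {n k : ℕ} (hk : k + 1 < n)

theorem isTau_unique {i j : Fin n} (hij : i ≠ j) {t t' : Equiv.Perm (Fin n)}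
    (h : IsTau k hk i j t) (h' : IsTau k hk i j t') : t = t' := by
  obtain ⟨h1, h2, h3⟩ := h
  obtain ⟨h1', h2', h3'⟩ := h'
  classical
  set A : Finset (Fin n) := {i, j}ᶜ with hA
  have hcard : A.card = n - 2 := by
    rw [hA, Finset.card_compl, Finset.card_insert_of_notMem (by simpa using hij),
      Finset.card_singleton, Fintype.card_fin]
  set eA := A.orderIsoOfFin hcard with heA
  have memA : ∀ m : Fin (n - 2), (eA m : Fin n) ≠ i ∧ (eA m : Fin n) ≠ j := by
    intro m
    have h2 : (eA m : Fin n) ∈ ({i, j}ᶜ : Finset (Fin n)) := (eA m).2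
    rw [Finset.mem_compl, Finset.mem_insert, Finset.mem_singleton] at h2
    push_neg at h2
    exact h2
  have key : ∀ (u : Equiv.Perm (Fin n)), u i = ⟨k, Nat.lt_of_succ_lt hk⟩ →
      u j = ⟨k + 1, hk⟩ →
      Set.range (fun m : Fin (n-2) => u (eA m)) =
        ({(⟨k, Nat.lt_of_succ_lt hk⟩ : Fin n), ⟨k+1, hk⟩} : Set (Fin n))ᶜ := by
    intro u hu1 hu2
    ext x
    simp only [Set.mem_range, Set.mem_compl_iff, Set.mem_insert_iff, Set.mem_singleton_iff]
    constructor
    · rintro ⟨m, rfl⟩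
      obtain ⟨mi, mj⟩ := memA m
      push_neg
      constructor
      · intro hx; exact mi (u.injective (hx.trans hu1.symm))
      · intro hx; exact mj (u.injective (hx.trans hu2.symm))
    · intro hx
      push_neg at hx
      obtain ⟨hx1, hx2⟩ := hx
      have hmem : u.symm x ∈ A := by
        show u.symm x ∈ ({i, j}ᶜ : Finset (Fin n))
        rw [Finset.mem_compl, Finset.mem_insert, Finset.mem_singleton]
        push_neg
        constructor
        · intro hc; apply hx1; rw [← hu1, ← hc, Equiv.apply_symm_apply]
        · intro hc; apply hx2; rw [← hu2, ← hc, Equiv.apply_symm_apply]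
      exact ⟨eA.symm ⟨u.symm x, hmem⟩, by simp⟩
  have smono : ∀ (u : Equiv.Perm (Fin n)),
      (∀ s v : Fin n, s < v → s ≠ i → s ≠ j → v ≠ i → v ≠ j → u s < u v) →
      StrictMono (fun m : Fin (n-2) => u (eA m)) := by
    intro u hu m m' hmm
    obtain ⟨mi, mj⟩ := memA m
    obtain ⟨mi', mj'⟩ := memA m'
    exact hu _ _ (by exact_mod_cast eA.strictMono hmm) mi mj mi' mj'
  have heq : (fun m : Fin (n-2) => t (eA m)) = (fun m : Fin (n-2) => t' (eA m)) := by
    apply ((smono t h3).range_inj (smono t' h3')).1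
    exact (key t h1 h2).trans (key t' h1' h2').symm
  apply Equiv.ext
  intro x
  by_cases hxi : x = i
  · rw [hxi, h1, h1']
  by_cases hxj : x = j
  · rw [hxj, h2, h2']
  have hmem : x ∈ A := by
    show x ∈ ({i, j}ᶜ : Finset (Fin n))
    rw [Finset.mem_compl, Finset.mem_insert, Finset.mem_singleton]; push_neg
    exact ⟨hxi, hxj⟩
  have := congrFun heq (eA.symm ⟨x, hmem⟩)
  simpa using this

theorem isTau_exists {i j : Fin n} (hij : i ≠ j) :
    ∃ t : Equiv.Perm (Fin n), IsTau k hk i j t := by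
  classical
  have hkk : (⟨k, Nat.lt_of_succ_lt hk⟩ : Fin n) ≠ ⟨k+1, hk⟩ := by
    simp [Fin.ext_iff]
  set A : Finset (Fin n) := {i, j}ᶜ with hA
  set B : Finset (Fin n) := {⟨k, Nat.lt_of_succ_lt hk⟩, ⟨k+1, hk⟩}ᶜ with hB
  have hcardA : A.card = n - 2 := by
    rw [hA, Finset.card_compl, Finset.card_insert_of_notMem (by simpa using hij),
      Finset.card_singleton, Fintype.card_fin]
  have hcardB : B.card = n - 2 := by
    rw [hB, Finset.card_compl, Finset.card_insert_of_notMem (by simpa using hkk),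
      Finset.card_singleton, Fintype.card_fin]
  set eA := A.orderIsoOfFin hcardA with heA
  set eB := B.orderIsoOfFin hcardB with heB
  have memAiff : ∀ x : Fin n, x ∈ A ↔ (x ≠ i ∧ x ≠ j) := by
    intro x
    show x ∈ ({i, j}ᶜ : Finset (Fin n)) ↔ _
    rw [Finset.mem_compl, Finset.mem_insert, Finset.mem_singleton]
    push_neg; exact Iff.rfl
  have memBval : ∀ m : Fin (n-2), (eB m : Fin n) ≠ ⟨k, Nat.lt_of_succ_lt hk⟩ ∧
      (eB m : Fin n) ≠ ⟨k+1, hk⟩ := by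
    intro m
    have h2 : (eB m : Fin n) ∈ ({(⟨k, Nat.lt_of_succ_lt hk⟩ : Fin n), ⟨k+1, hk⟩}ᶜ : Finset (Fin n)) := (eB m).2
    rw [Finset.mem_compl, Finset.mem_insert, Finset.mem_singleton] at h2
    push_neg at h2
    exact h2
  set f : Fin n → Fin n := fun x =>
    if x = i then ⟨k, Nat.lt_of_succ_lt hk⟩
    else if x = j then ⟨k+1, hk⟩
    else if h : x ∈ A then (eB (eA.symm ⟨x, h⟩) : Fin n)
    else x with hf
  have hfi : f i = ⟨k, Nat.lt_of_succ_lt hk⟩ := by simp [hf]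
  have hfj : f j = ⟨k+1, hk⟩ := by simp [hf, hij.symm]
  have hfval : ∀ x : Fin n, ∀ hxi : x ≠ i, ∀ hxj : x ≠ j,
      f x = (eB (eA.symm ⟨x, (memAiff x).2 ⟨hxi, hxj⟩⟩) : Fin n) := by
    intro x hxi hxj
    simp only [hf, if_neg hxi, if_neg hxj, dif_pos ((memAiff x).2 ⟨hxi, hxj⟩)]
  have hinj : Function.Injective f := by
    intro x y hxy
    by_cases hxi : x = i
    · subst hxi
      rw [hfi] at hxy
      by_cases hyi : y = x
      · exact hyi.symm
      by_cases hyj : y = j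
      · rw [hyj, hfj] at hxy; exact absurd hxy hkk
      · rw [hfval y hyi hyj] at hxy; exact absurd hxy.symm (memBval _).1
    by_cases hxj : x = j
    · subst hxj
      rw [hfj] at hxy
      by_cases hyi : y = i
      · rw [hyi, hfi] at hxy; exact absurd hxy hkk.symm
      by_cases hyj : y = x
      · exact hyj.symm
      · rw [hfval y hyi hyj] at hxy; exact absurd hxy.symm (memBval _).2
    rw [hfval x hxi hxj] at hxy
    by_cases hyi : y = i
    · rw [hyi, hfi] at hxy; exact absurd hxy (memBval _).1
    by_cases hyj : y = j
    · rw [hyj, hfj] at hxy; exact absurd hxy (memBval _).2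
    rw [hfval y hyi hyj] at hxy
    have := eA.symm.injective (eB.injective (Subtype.ext hxy))
    exact Subtype.ext_iff.1 this
  set t : Equiv.Perm (Fin n) := Equiv.ofBijective f
    ((Finite.injective_iff_bijective).1 hinj) with ht
  refine ⟨t, ?_, ?_, ?_⟩
  · exact hfi
  · exact hfj
  · intro s u hsu hsi hsj hui huj
    have hs := hfval s hsi hsj
    have hu := hfval u hui huj
    show f s < f u
    rw [hs, hu]
    have hsA := (memAiff s).2 ⟨hsi, hsj⟩
    have huA := (memAiff u).2 ⟨hui, huj⟩
    have hlt : (⟨s, hsA⟩ : {x // x ∈ A}) < ⟨u, huA⟩ := hsu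
    exact eB.strictMono (eA.symm.strictMono hlt)

end Aux

theorem stmt3 (n k : ℕ) (hn : 2 ≤ n) (hk : k + 1 < n) (w : Equiv.Perm (Fin n))
    (hw : w⁻¹ ⟨k, Nat.lt_of_succ_lt hk⟩ < w⁻¹ ⟨k + 1, hk⟩) :
    ∃! x : Equiv.Perm (Fin n) × Equiv.Perm (Fin n) × Fin n × Fin n,
      x.1 ⟨k, Nat.lt_of_succ_lt hk⟩ = ⟨k, Nat.lt_of_succ_lt hk⟩ ∧
      x.1 ⟨k + 1, hk⟩ = ⟨k + 1, hk⟩ ∧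
      x.2.2.1 < x.2.2.2 ∧
      IsTau k hk x.2.2.1 x.2.2.2 x.2.1 ∧
      w = x.1 * x.2.1 := by
  set ka : Fin n := ⟨k, Nat.lt_of_succ_lt hk⟩
  set kb : Fin n := ⟨k + 1, hk⟩
  set i : Fin n := w⁻¹ ka with hi
  set j : Fin n := w⁻¹ kb with hj
  have hij : i < j := hw
  obtain ⟨t, ht⟩ := isTau_exists hk (ne_of_lt hij)
  refine ⟨(w * t⁻¹, t, i, j), ⟨?_, ?_, hij, ht, by group⟩, ?_⟩
  · show w (t⁻¹ ka) = ka
    have : t⁻¹ ka = i := by apply t.injective; simp [ht.1]; rfl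
    rw [this, hi]; simp
  · show w (t⁻¹ kb) = kb
    have : t⁻¹ kb = j := by apply t.injective; simp [ht.2.1]; rfl
    rw [this, hj]; simp
  · rintro ⟨σ', t', i', j'⟩ ⟨hσ1, hσ2, hij', ht', hw'⟩
    have hti : t' i' = ka := ht'.1
    have htj : t' j' = kb := ht'.2.1
    have hi' : i' = i := by
      rw [hi, hw']
      have : (σ' * t') i' = ka := by
        show σ' (t' i') = ka
        rw [hti, hσ1]
      rw [← this]; simp
    have hj' : j' = j := by
      rw [hj, hw']
      have : (σ' * t') j' = kb := by
        show σ' (t' j') = kb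
        rw [htj, hσ2]
      rw [← this]; simp
    subst hi'; subst hj'
    have htt : t' = t := isTau_unique hk (ne_of_lt hij) ht' ht
    subst htt
    have hσ : σ' = w * t'⁻¹ := by rw [hw']; group
    rw [hσ]
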